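/- For all n ≥ 2, α_n + β_n + γ_n = 1. -/

import Mathlib

theorem stmt_15 (p : ℝ) (hp : 0 < p) (hp' : p < 1/2)
(b c d : ℕ → ℝ)
    (hb2 : b 2 = (1 - p) / (5 - 7*p))
    (hc2 : c 2 = (1 - 2*p) / (5 - 7*p))
    (hd : ∀ n, 2 ≤ n → d n = c n*(2-p)*p + (c n)^2*(1-2*p) + (b n)^2*p*(2-3*p)
        + b n*p*(3-4*p) + b n * c n*(2-6*p+6*p^2))
    (hbrec : ∀ n, 2 ≤ n → b (n+1) = p*(b n * c n*(2-3*p) + (b n)^2*(1-p) + (c n)^2*p) / d n)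
    (hcrec : ∀ n, 2 ≤ n → c (n+1) = p*(b n * c n + (c n)^2*(1-p) + (b n)^2*(1-2*p)) / d n)
    (α β γ : ℕ → ℝ)
    (hα2 : α 2 = (3 - 4*p) / (5 - 7*p))
    (hβ2 : β 2 = (1 - p) / (5 - 7*p))
    (hγ2 : γ 2 = (1 - 2*p) / (5 - 7*p))
    (hαrec : ∀ n, 2 ≤ n → α (n+1) = ((b n + c n)*(1-p)*p + (c n)^2*(1-2*p)
        + (b n)^2*p*(2-3*p) + b n * c n*(2 - 6*p*(1-p))) / d n)
    (hβrec : ∀ n, 2 ≤ n → β (n+1) = (b n + c n)*(1-p)*p / d n)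
    (hγrec : ∀ n, 2 ≤ n → γ (n+1) = p*(b n*(1-2*p) + c n * p) / d n)
    (hdpos : ∀ n, 2 ≤ n → 0 < d n) :
    ∀ n, 2 ≤ n → α n + β n + γ n = 1 := by
  intro n hn
  match n, hn with
  | 2, _ =>
    rw [hα2, hβ2, hγ2]
    have h57 : (5 : ℝ) - 7*p ≠ 0 := by nlinarith
    rw [← add_div, ← add_div, div_eq_one_iff_eq h57]
    ring
  | (m+3), _ =>
    have hm : 2 ≤ m + 2 := by omega
    rw [hαrec _ hm, hβrec _ hm, hγrec _ hm]
    have hd0 : d (m+2) ≠ 0 := ne_of_gt (hdpos _ hm)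
    rw [hd _ hm] at hd0 ⊢
    rw [← add_div, ← add_div, div_eq_one_iff_eq hd0]
    ring
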